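/- Let A ⊆ ℝ^n be a nonempty finite set with C = conv A. Then 0 ∉ cl(es(C)), i.e., d(0, es(C)) > 0. -/

import Mathlib

open Set Metric Filter Topology
open scoped RealInnerProductSpace

/-- For a finite set A with C = conv A, the origin has positive distance from the
end set of C, i.e. 0 is not in its closure. -/
theorem zero_not_mem_closure_end_set {n : ℕ} (A : Set (EuclideanSpace ℝ (Fin n)))
    (hfin : A.Finite) (hne : A.Nonempty) :
    (0 : EuclideanSpace ℝ (Fin n)) ∉
      closure {x ∈ convexHull ℝ A | ∀ t : ℝ, 1 < t → t • x ∉ convexHull ℝ A} := by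
  classical
  intro h0
  set s : Finset (EuclideanSpace ℝ (Fin n)) := hfin.toFinset with hsdef
  have hAs : A = (s : Set (EuclideanSpace ℝ (Fin n))) := (hfin.coe_toFinset).symm
  rw [hAs] at h0
  set C := convexHull ℝ (s : Set (EuclideanSpace ℝ (Fin n))) with hCdef
  obtain ⟨x, hxmem, hxlim⟩ := mem_closure_iff_seq_limit.1 h0
  have hxC : ∀ k, x k ∈ C := fun k => (hxmem k).1
  have hx2 : ∀ k, (2:ℝ) • x k ∉ C := fun k => (hxmem k).2 2 one_lt_two
  -- weights in the standard simplex over ↥s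
  have hw : ∀ k, ∃ w : ↥s → ℝ, w ∈ stdSimplex ℝ ↥s ∧
      ∑ a : ↥s, w a • (a : EuclideanSpace ℝ (Fin n)) = x k := by
    intro k
    obtain ⟨w, hw0, hw1, hwc⟩ := Finset.mem_convexHull'.1 (hxC k)
    refine ⟨fun a => w a, ⟨fun a => hw0 a a.2, ?_⟩, ?_⟩
    · rw [Finset.univ_eq_attach, ← hw1]; exact Finset.sum_attach s w
    · rw [Finset.univ_eq_attach, ← hwc]; exact Finset.sum_attach s (fun y => w y • y)
  choose w hwsimplex hwsum using hw
  -- compactness: convergent subsequence of weights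
  obtain ⟨L, hLmem, φ, hφmono, hφlim⟩ :=
    (isCompact_stdSimplex ℝ ↥s).tendsto_subseq (fun k => hwsimplex k)
  -- the limit weights represent 0
  have hcont : Continuous fun v : ↥s → ℝ => ∑ a : ↥s, v a • (a : EuclideanSpace ℝ (Fin n)) :=
    continuous_finset_sum _ fun a _ => (continuous_apply a).smul continuous_const
  have hL0 : ∑ a : ↥s, L a • (a : EuclideanSpace ℝ (Fin n)) = 0 := by
    have h1 : Tendsto (fun k => ∑ a : ↥s, (w (φ k)) a • (a : EuclideanSpace ℝ (Fin n))) atTop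
        (𝓝 (∑ a : ↥s, L a • (a : EuclideanSpace ℝ (Fin n)))) := (hcont.tendsto L).comp hφlim
    have heq : (fun k => ∑ a : ↥s, (w (φ k)) a • (a : EuclideanSpace ℝ (Fin n))) = x ∘ φ :=
      funext fun k => hwsum (φ k)
    rw [heq] at h1
    exact tendsto_nhds_unique h1 (hxlim.comp hφmono.tendsto_atTop)
  -- eventually all coordinates of 2w - L are nonnegative
  have hev : ∀ᶠ k in atTop, ∀ a : ↥s, 0 ≤ 2 * w (φ k) a - L a := by
    rw [eventually_all]
    intro a
    rcases eq_or_lt_of_le (hLmem.1 a) with h | h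
    · exact Eventually.of_forall fun k => by
        have := (hwsimplex (φ k)).1 a; linarith
    · have hca : Tendsto (fun k => w (φ k) a) atTop (𝓝 (L a)) :=
        ((continuous_apply a).tendsto L).comp hφlim
      filter_upwards [hca.eventually (eventually_gt_nhds (by linarith : L a / 2 < L a))]
        with k hk
      linarith
  obtain ⟨k, hk⟩ := hev.exists
  -- build the convex combination for 2 • x (φ k)
  apply hx2 (φ k)
  have hsum1 : ∑ a : ↥s, (2 * w (φ k) a - L a) = 1 := by
    rw [Finset.sum_sub_distrib, ← Finset.mul_sum, (hwsimplex (φ k)).2, hLmem.2]; norm_num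
  have hcomb : ∑ a : ↥s, (2 * w (φ k) a - L a) • (a : EuclideanSpace ℝ (Fin n))
      = (2:ℝ) • x (φ k) := by
    simp only [sub_smul, Finset.sum_sub_distrib, hL0, sub_zero, mul_smul]
    rw [← Finset.smul_sum, hwsum]
  have hmem := Finset.centerMass_mem_convexHull (Finset.univ : Finset ↥s)
    (w := fun a => 2 * w (φ k) a - L a) (z := fun a => (a : EuclideanSpace ℝ (Fin n)))
    (fun a _ => hk a) (by rw [hsum1]; exact one_pos) (fun a _ => Finset.mem_coe.2 a.2)
  rwa [Finset.centerMass_eq_of_sum_1 _ _ hsum1, hcomb] at hmem
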